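/- Suppose m ≥ 1, u₁,…,u_m is a basis of V over E orthogonal with respect to Φ, d_j := Φ(u_j,u_j) (each d_j is fixed by ι, so σ(d_j) ∈ ℝ for every embedding σ : E → ℂ), and there is a ring embedding σ₀ : E → ℂ such that σ₀(d₁) > 0, σ₀(d_j) < 0 for 2 ≤ j ≤ m, and σ(d_j) < 0 for every ring embedding σ : E → ℂ with σ ∉ {σ₀, conj∘σ₀} and every j. Then the real quadratic form ξ ↦ B_ℝ(ξ,ξ) on the (2ms)-dimensional ℝ-vector space V ⊗_ℚ ℝ has signature (2, 2ms − 2), i.e. it is equivalent over ℝ to a diagonal quadratic form with exactly 2 coefficients equal to +1 and 2ms − 2 coefficients equal to −1. -/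

import Mathlib

open scoped TensorProduct

noncomputable section AuxStmt11

open Matrix in
lemma aux_emb_inj {K : Type*} [Field K] [NumberField K] {κ : Type*} [Fintype κ] [DecidableEq κ]
    (b : Module.Basis κ ℚ K) (c : κ → ℂ)
    (h : ∀ σ : K →ₐ[ℚ] ℂ, ∑ i, c i * σ (b i) = 0) : c = 0 := by
  classical
  set A := Algebra.embeddingsMatrix ℚ ℂ (b : κ → K) with hA
  have hmv : Aᵀ.mulVec c = 0 := by
    ext σ
    simpa [Matrix.mulVec, dotProduct, hA, Algebra.embeddingsMatrix, mul_comm]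
      using h σ
  set M := (Algebra.traceMatrix ℚ (b : κ → K)).map (algebraMap ℚ ℂ) with hM
  have h2 : M.mulVec c = 0 := by
    rw [hM, Algebra.traceMatrix_eq_embeddingsMatrix_mul_trans ℚ ℂ, ← hA,
      ← Matrix.mulVec_mulVec, hmv, Matrix.mulVec_zero]
  have hdet : IsUnit M.det := by
    rw [hM, show (Algebra.traceMatrix ℚ (b:κ→K)).map ⇑(algebraMap ℚ ℂ) = (algebraMap ℚ ℂ).mapMatrix (Algebra.traceMatrix ℚ (b:κ→K)) from rfl, ← RingHom.map_det]
    refine IsUnit.mk0 _ ?_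
    simp only [ne_eq, map_eq_zero]
    rw [Algebra.traceMatrix_of_basis]
    exact (LinearMap.BilinForm.nondegenerate_iff_det_ne_zero b).mp
      (traceForm_nondegenerate _ _)
  calc c = (M⁻¹ * M).mulVec c := by rw [Matrix.nonsing_inv_mul _ hdet, Matrix.one_mulVec]
    _ = M⁻¹.mulVec (M.mulVec c) := by rw [Matrix.mulVec_mulVec]
    _ = 0 := by rw [h2, Matrix.mulVec_zero]

section CM
variable {E₀ E : Type*} [Field E₀] [Field E] [Algebra E₀ E]
  (htotreal : ∀ (σ : E₀ →+* ℂ) (x : E₀), (σ x).im = 0)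
  (θ : E) (θ0 : E₀) (hθ0 : algebraMap E₀ E θ0 = θ ^ 2)
  (hθ0neg : ∀ σ : E₀ →+* ℝ, σ θ0 < 0)

include htotreal in
lemma aux_im0 (σ : E →+* ℂ) (a : E₀) : (σ (algebraMap E₀ E a)).im = 0 :=
  htotreal (σ.comp (algebraMap E₀ E)) a

include htotreal hθ0 hθ0neg in
lemma aux_theta (σ : E →+* ℂ) : (σ θ).re = 0 ∧ (σ θ).im ≠ 0 := by
  set τ' : E₀ →+* ℂ := σ.comp (algebraMap E₀ E) with hτ'
  have him : ∀ a, (τ' a).im = 0 := htotreal τ'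
  let τ : E₀ →+* ℝ :=
  { toFun := fun a => (τ' a).re
    map_one' := by simp
    map_mul' := by
      intro a b
      simp only [map_mul, Complex.mul_re, him, mul_zero, zero_mul, sub_zero]
    map_zero' := by simp
    map_add' := by intro a b; simp [Complex.add_re] }
  have hsq : (σ θ) ^ 2 = ((τ θ0 : ℝ) : ℂ) := by
    rw [← map_pow, ← hθ0]
    apply Complex.ext
    · simp [τ, τ']
    · simp only [Complex.ofReal_im]
      exact him θ0
  have hneg : τ θ0 < 0 := hθ0neg τ
  set w := σ θ
  have h1 : w.re ^ 2 - w.im ^ 2 = τ θ0 := by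
    have := congrArg Complex.re hsq
    simpa [pow_two, Complex.mul_re] using this
  have h2 : w.re * w.im = 0 := by
    have := congrArg Complex.im hsq
    simp only [pow_two, Complex.mul_im, Complex.ofReal_im] at this
    linarith
  constructor
  · rcases mul_eq_zero.mp h2 with h | h
    · exact h
    · exfalso; rw [h] at h1; nlinarith [sq_nonneg w.re]
  · intro h; rw [h] at h1; nlinarith [sq_nonneg w.re]

include htotreal hθ0 hθ0neg in
lemma aux_conj_intertwine
    (hgen : ∀ x : E, ∃ a b : E₀, x = algebraMap E₀ E a + algebraMap E₀ E b * θ)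
    (ι : E →+* E) (hιfix : ∀ a : E₀, ι (algebraMap E₀ E a) = algebraMap E₀ E a)
    (hιθ : ι θ = -θ) (σ : E →+* ℂ) (e : E) :
    σ (ι e) = (starRingEnd ℂ) (σ e) := by
  obtain ⟨a, b, rfl⟩ := hgen e
  have hre := (aux_theta htotreal θ θ0 hθ0 hθ0neg σ).1
  have hconjθ : (starRingEnd ℂ) (σ θ) = - σ θ := by
    apply Complex.ext <;> simp [hre]
  have hca : ∀ x : E₀, (starRingEnd ℂ) (σ (algebraMap E₀ E x)) = σ (algebraMap E₀ E x) := by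
    intro x
    apply Complex.ext <;> simp [aux_im0 htotreal σ x]
  simp only [map_add, map_mul, hιfix, hιθ, map_neg, hca, hconjθ]
end CM

section Zmap
variable {E V : Type*} [Field E] [Algebra ℚ E] [AddCommGroup V] [Module E V] [Module ℚ V]
  [IsScalarTower ℚ E V] {m : ℕ}

def zmap (u : Module.Basis (Fin m) E V) (σ : E →ₐ[ℚ] ℂ) (j : Fin m) : (ℝ ⊗[ℚ] V) →ₗ[ℝ] ℂ :=
  TensorProduct.AlgebraTensorModule.lift
    (LinearMap.toSpanSingleton ℝ (V →ₗ[ℚ] ℂ)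
      (σ.toLinearMap.comp ((u.coord j).restrictScalars ℚ)))

lemma zmap_tmul (u : Module.Basis (Fin m) E V) (σ : E →ₐ[ℚ] ℂ) (j : Fin m) (c : ℝ) (x : V) :
    zmap u σ j (c ⊗ₜ[ℚ] x) = c • σ (u.repr x j) := rfl
end Zmap

end AuxStmt11

set_option maxHeartbeats 2000000 in
/-- `E = E₀(θ)` a CM field of degree `2s` with CM involution `ι`,
`Φ` a nondegenerate hermitian sesquilinear form on the `m`-dimensional (`m ≥ 1`)
`E`-vector space `V` with a `Φ`-orthogonal basis `u₁,…,u_m`, `d_j = Φ(u_j,u_j)` fixed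
by `ι` (so each `σ(d_j)` is real), and `σ₀ : E → ℂ` an embedding with `σ₀(d₁) > 0`,
`σ₀(d_j) < 0` for `2 ≤ j ≤ m`, and `σ(d_j) < 0` for all `σ ∉ {σ₀, conj∘σ₀}` and all
`j`.  Then the real quadratic form `ξ ↦ B(ξ,ξ)` on the `(2ms)`-dimensional space
`V ⊗_ℚ ℝ` (with `B` the `ℝ`-bilinear extension of `tr∘Φ`) has signature
`(2, 2ms − 2)`: it is equivalent over `ℝ` to a diagonal quadratic form with exactly
`2` coefficients `+1` and `2ms − 2` coefficients `−1`. -/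
theorem stmt11 (E₀ E V : Type*) [Field E₀] [NumberField E₀] [Field E] [NumberField E]
    [Algebra E₀ E] [IsScalarTower ℚ E₀ E]
    (htotreal : ∀ (σ : E₀ →+* ℂ) (x : E₀), (σ x).im = 0)
    (s : ℕ) (hs : Module.finrank ℚ E₀ = s)
    (θ : E) (hθ : θ ∉ Set.range (algebraMap E₀ E))
    (θ0 : E₀) (hθ0 : algebraMap E₀ E θ0 = θ ^ 2)
    (hθ0neg : ∀ σ : E₀ →+* ℝ, σ θ0 < 0)
    (hgen : ∀ x : E, ∃ a b : E₀, x = algebraMap E₀ E a + algebraMap E₀ E b * θ)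
    (ι : E →+* E) (hιfix : ∀ a : E₀, ι (algebraMap E₀ E a) = algebraMap E₀ E a)
    (hιθ : ι θ = -θ)
    [AddCommGroup V] [Module E V] [Module ℚ V] [IsScalarTower ℚ E V]
    (Φ : V → V → E)
    (hΦadd1 : ∀ x x' y, Φ (x + x') y = Φ x y + Φ x' y)
    (hΦsmul1 : ∀ (e : E) (x y : V), Φ (e • x) y = e * Φ x y)
    (hΦadd2 : ∀ x y y', Φ x (y + y') = Φ x y + Φ x y')
    (hΦsmul2 : ∀ (e : E) (x y : V), Φ x (e • y) = ι e * Φ x y)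
    (hΦherm : ∀ x y, Φ y x = ι (Φ x y))
    (hΦnondeg : ∀ x, (∀ y, Φ x y = 0) → x = 0)
    (m : ℕ) (hm : 1 ≤ m) (u : Module.Basis (Fin m) E V)
    (horth : ∀ i j : Fin m, i ≠ j → Φ (u i) (u j) = 0)
    (d : Fin m → E) (hd : ∀ j, d j = Φ (u j) (u j))
    (hdfix : ∀ j, ι (d j) = d j)
    (σ₀ : E →+* ℂ)
    (hreal : ∀ (σ : E →+* ℂ) (j : Fin m), (σ (d j)).im = 0)
    (hσ₀1 : ∀ j : Fin m, (j : ℕ) = 0 → 0 < (σ₀ (d j)).re)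
    (hσ₀neg : ∀ j : Fin m, 1 ≤ (j : ℕ) → (σ₀ (d j)).re < 0)
    (hother : ∀ σ : E →+* ℂ, σ ≠ σ₀ → σ ≠ (starRingEnd ℂ).comp σ₀ →
      ∀ j : Fin m, (σ (d j)).re < 0)
    (B : (ℝ ⊗[ℚ] V) →ₗ[ℝ] (ℝ ⊗[ℚ] V) →ₗ[ℝ] ℝ)
    (hB : ∀ (c c' : ℝ) (x y : V),
      B (c ⊗ₜ[ℚ] x) (c' ⊗ₜ[ℚ] y) = c * c' * ((Algebra.trace ℚ E (Φ x y) : ℚ) : ℝ)) :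
    ∃ g : (ℝ ⊗[ℚ] V) ≃ₗ[ℝ] (Fin (2 * m * s) → ℝ), ∀ ξ : ℝ ⊗[ℚ] V,
      B ξ ξ = ∑ i : Fin (2 * m * s),
        (if (i : ℕ) < 2 then (1 : ℝ) else -1) * (g ξ i) ^ 2 := by
  classical
  have hm0 : 0 < m := hm
  -- basic embedding facts
  have hre0 : ∀ σ : E →+* ℂ, (σ θ).re = 0 :=
    fun σ => (aux_theta htotreal θ θ0 hθ0 hθ0neg σ).1
  have him0 : ∀ σ : E →+* ℂ, (σ θ).im ≠ 0 :=
    fun σ => (aux_theta htotreal θ θ0 hθ0 hθ0neg σ).2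
  have hconj : ∀ (σ : E →+* ℂ) (e : E), σ (ι e) = (starRingEnd ℂ) (σ e) :=
    aux_conj_intertwine htotreal θ θ0 hθ0 hθ0neg hgen ι hιfix hιθ
  -- Gram expansion
  have hconjA : ∀ (σ : E →ₐ[ℚ] ℂ) (e : E), σ (ι e) = (starRingEnd ℂ) (σ e) :=
    fun σ e => hconj σ.toRingHom e
  have hGram : ∀ x y : V, Φ x y = ∑ j, u.repr x j * ι (u.repr y j) * d j := by
    intro x y
    have hx := u.sum_repr x
    have hy := u.sum_repr y
    let F : V →+ E := AddMonoidHom.mk' (fun x => Φ x y) (fun a b => hΦadd1 a b y)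
    calc Φ x y = Φ (∑ j, u.repr x j • u j) y := by rw [hx]
      _ = ∑ j, Φ (u.repr x j • u j) y := map_sum F _ _
      _ = ∑ j, u.repr x j * Φ (u j) y := by
          exact Finset.sum_congr rfl fun j _ => hΦsmul1 _ _ _
      _ = ∑ j, u.repr x j * (ι (u.repr y j) * d j) := ?_
      _ = ∑ j, u.repr x j * ι (u.repr y j) * d j := by
          exact Finset.sum_congr rfl fun j _ => (mul_assoc _ _ _).symm
    refine Finset.sum_congr rfl fun j _ => ?_
    congr 1
    let F2 : V →+ E := AddMonoidHom.mk' (fun z => Φ (u j) z) (fun a b => hΦadd2 (u j) a b)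
    have hG : Φ (u j) y = ∑ k, ι (u.repr y k) * Φ (u j) (u k) := by
      conv_lhs => rw [← hy]
      rw [show Φ (u j) (∑ k, u.repr y k • u k) = F2 (∑ k, u.repr y k • u k) from rfl,
        map_sum F2]
      exact Finset.sum_congr rfl fun k _ => hΦsmul2 _ _ _
    rw [hG, Finset.sum_eq_single j]
    · rw [← hd]
    · intro k _ hk
      rw [horth j k (Ne.symm hk), mul_zero]
    · intro h; exact absurd (Finset.mem_univ j) h
  -- trace formula
  have htr : ∀ e : E, ((Algebra.trace ℚ E e : ℚ) : ℂ) = ∑ σ : E →ₐ[ℚ] ℂ, σ e := by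
    intro e
    have h := trace_eq_sum_embeddings (E := ℂ) (K := ℚ) (L := E) (x := e)
    rw [← h, eq_ratCast (algebraMap ℚ ℂ)]
  -- the main bilinear identity over ℂ
  have hBC : ∀ ξ ζ : ℝ ⊗[ℚ] V, ((B ξ ζ : ℝ) : ℂ) =
      ∑ σ : E →ₐ[ℚ] ℂ, ∑ j, (zmap u σ j ξ) * (starRingEnd ℂ) (zmap u σ j ζ) * σ (d j) := by
    intro ξ ζ
    induction ξ using TensorProduct.induction_on with
    | zero => simp
    | add ξ₁ ξ₂ h1 h2 =>
      simp only [map_add, LinearMap.add_apply, Complex.ofReal_add, h1, h2, add_mul,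
        ← Finset.sum_add_distrib]
    | tmul c x =>
      induction ζ using TensorProduct.induction_on with
      | zero => simp
      | add ζ₁ ζ₂ h1 h2 =>
        simp only [map_add, Complex.ofReal_add, h1, h2, mul_add, add_mul,
          ← Finset.sum_add_distrib]
      | tmul c' y =>
        rw [hB, hGram x y]
        push_cast
        rw [htr]
        rw [Finset.mul_sum]
        refine Finset.sum_congr rfl fun σ _ => ?_
        rw [map_sum, Finset.mul_sum]
        refine Finset.sum_congr rfl fun j _ => ?_
        rw [zmap_tmul, zmap_tmul, map_mul, map_mul, hconjA]
        simp only [Complex.real_smul, map_mul, Complex.conj_ofReal]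
        ring
  -- the quadratic form
  have hQ : ∀ ξ : ℝ ⊗[ℚ] V, B ξ ξ =
      ∑ σ : E →ₐ[ℚ] ℂ, ∑ j, (σ (d j)).re * Complex.normSq (zmap u σ j ξ) := by
    intro ξ
    have h := hBC ξ ξ
    have hrhs : (∑ σ : E →ₐ[ℚ] ℂ, ∑ j, (zmap u σ j ξ) * (starRingEnd ℂ) (zmap u σ j ξ) * σ (d j))
        = (((∑ σ : E →ₐ[ℚ] ℂ, ∑ j, (σ (d j)).re * Complex.normSq (zmap u σ j ξ) : ℝ)) : ℂ) := by
      push_cast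
      refine Finset.sum_congr rfl fun σ _ => Finset.sum_congr rfl fun j _ => ?_
      rw [Complex.mul_conj]
      have hd' : σ (d j) = (((σ (d j)).re : ℝ) : ℂ) := by
        apply Complex.ext
        · rfl
        · simpa using hreal σ.toRingHom j
      conv_lhs => rw [hd']
      push_cast
      ring
    rw [hrhs] at h
    exact_mod_cast h
  -- conjugation on embeddings
  set cm : (E →ₐ[ℚ] ℂ) → (E →ₐ[ℚ] ℂ) :=
    fun σ => ((Complex.conjAe.restrictScalars ℚ).toAlgHom).comp σ with hcmdef
  have hcm_apply : ∀ (σ : E →ₐ[ℚ] ℂ) (e : E), cm σ e = (starRingEnd ℂ) (σ e) := fun σ e => rfl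
  have hcm_inv : ∀ σ, cm (cm σ) = σ := by
    intro σ; ext e
    simp [hcm_apply]
  have hzcm : ∀ (σ : E →ₐ[ℚ] ℂ) (j : Fin m) (ξ : ℝ ⊗[ℚ] V),
      zmap u (cm σ) j ξ = (starRingEnd ℂ) (zmap u σ j ξ) := by
    intro σ j ξ
    induction ξ using TensorProduct.induction_on with
    | zero => simp
    | add ξ₁ ξ₂ h1 h2 => simp only [map_add, h1, h2]
    | tmul c x =>
      rw [zmap_tmul, zmap_tmul, hcm_apply]
      simp only [Complex.real_smul, map_mul, Complex.conj_ofReal]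
  set P : (E →ₐ[ℚ] ℂ) → Prop := fun σ => 0 < (σ θ).im with hPdef
  have hPcm : ∀ σ, P (cm σ) ↔ ¬ P σ := by
    intro σ
    have h1 : (cm σ θ).im = - (σ θ).im := by rw [hcm_apply]; simp
    have h2 : (σ θ).im ≠ 0 := him0 σ.toRingHom
    simp only [hPdef, h1]
    constructor
    · intro h hh; linarith
    · intro h; rcases lt_or_gt_of_ne h2 with hl | hl
      · linarith
      · exact absurd hl h
  -- degree 2
  have hθne : θ ≠ 0 := fun h => hθ ⟨0, by simp [h]⟩
  have hfr2 : Module.finrank E₀ E = 2 := by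
    have hind : LinearIndependent E₀ ![1, θ] := by
      rw [linearIndependent_fin2]
      constructor
      · simpa using hθne
      · intro a ha
        simp only [Matrix.cons_val_one, Matrix.head_cons, Matrix.cons_val_zero] at ha
        have ha0 : a ≠ 0 := by rintro rfl; simp at ha
        apply hθ
        refine ⟨a⁻¹, ?_⟩
        rw [map_inv₀]
        rw [Algebra.smul_def] at ha
        exact (eq_inv_of_mul_eq_one_right ha).symm
    have hspan : ⊤ ≤ Submodule.span E₀ (Set.range ![1, θ]) := by
      intro x _
      obtain ⟨a, b, rfl⟩ := hgen x
      have h1 : (1:E) ∈ Set.range ![1,θ] := ⟨0, rfl⟩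
      have h2 : θ ∈ Set.range ![1,θ] := ⟨1, rfl⟩
      apply Submodule.add_mem
      · rw [Algebra.algebraMap_eq_smul_one]
        exact Submodule.smul_mem _ _ (Submodule.subset_span h1)
      · rw [← Algebra.smul_def]
        exact Submodule.smul_mem _ _ (Submodule.subset_span h2)
    let bθ : Module.Basis (Fin 2) E₀ E := Module.Basis.mk hind hspan
    rw [Module.finrank_eq_card_basis bθ, Fintype.card_fin]
  have hfrE : Module.finrank ℚ E = 2 * s := by
    rw [← Module.finrank_mul_finrank ℚ E₀ E, hs, hfr2]; ring
  have hcardSig : Fintype.card (E →ₐ[ℚ] ℂ) = 2 * s := by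
    rw [AlgHom.card]; exact hfrE
  -- the subtype S of embeddings with positive imaginary part on θ
  let ec : {σ : E →ₐ[ℚ] ℂ // ¬ P σ} ≃ {σ : E →ₐ[ℚ] ℂ // P σ} :=
    { toFun := fun σ => ⟨cm σ.1, (hPcm σ.1).mpr σ.2⟩
      invFun := fun σ => ⟨cm σ.1, fun hh => (hPcm σ.1).mp hh σ.2⟩
      left_inv := fun σ => by simp [hcm_inv]
      right_inv := fun σ => by simp [hcm_inv] }
  have hcardS : Fintype.card {σ : E →ₐ[ℚ] ℂ // P σ} = s := by
    have h1 := Fintype.card_subtype_compl P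
    have h2 := Fintype.card_congr ec
    have h3 : Fintype.card {σ : E →ₐ[ℚ] ℂ // P σ} ≤ Fintype.card (E →ₐ[ℚ] ℂ) :=
      Fintype.card_subtype_le _
    rw [hcardSig] at h1 h3
    omega
  -- the quadratic form, summed over S
  have hQ2 : ∀ ξ : ℝ ⊗[ℚ] V, B ξ ξ = ∑ σ : {σ : E →ₐ[ℚ] ℂ // P σ}, ∑ j,
      2 * ((σ.1) (d j)).re * Complex.normSq (zmap u σ.1 j ξ) := by
    intro ξ
    rw [hQ ξ]
    set f : (E →ₐ[ℚ] ℂ) → ℝ :=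
      fun σ => ∑ j, (σ (d j)).re * Complex.normSq (zmap u σ j ξ) with hf
    have hfcm : ∀ σ, f (cm σ) = f σ := by
      intro σ
      refine Finset.sum_congr rfl fun j _ => ?_
      rw [hzcm, hcm_apply]
      simp [Complex.normSq_conj]
    have h2 : ∑ σ : {σ : E →ₐ[ℚ] ℂ // ¬ P σ}, f σ.1 = ∑ σ : {σ : E →ₐ[ℚ] ℂ // P σ}, f σ.1 := by
      refine Fintype.sum_equiv ec (fun σ => f σ.1) (fun σ => f σ.1) fun σ => ?_
      exact (hfcm σ.1).symm
    have hsplit := Fintype.sum_subtype_add_sum_subtype P f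
    calc (∑ σ : E →ₐ[ℚ] ℂ, f σ)
        = ∑ σ : {σ : E →ₐ[ℚ] ℂ // P σ}, f σ.1 + ∑ σ : {σ : E →ₐ[ℚ] ℂ // ¬ P σ}, f σ.1 :=
          hsplit.symm
      _ = ∑ σ : {σ : E →ₐ[ℚ] ℂ // P σ}, (f σ.1 + f σ.1) := by
          rw [h2, ← Finset.sum_add_distrib]
      _ = ∑ σ : {σ : E →ₐ[ℚ] ℂ // P σ}, ∑ j,
            2 * ((σ.1) (d j)).re * Complex.normSq (zmap u σ.1 j ξ) := by
          refine Finset.sum_congr rfl fun σ _ => ?_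
          rw [← two_mul, hf, Finset.mul_sum]
          exact Finset.sum_congr rfl fun j _ => by ring
  -- σ₀ as algebra hom; representative in S
  let σA : E →ₐ[ℚ] ℂ := σ₀.toRatAlgHom
  have hσAeq : (σA : E →+* ℂ) = σ₀ := rfl
  let σS : {σ : E →ₐ[ℚ] ℂ // P σ} :=
    if h : P σA then ⟨σA, h⟩ else ⟨cm σA, (hPcm σA).mpr h⟩
  have hσSdef : σS = if h : P σA then ⟨σA, h⟩ else ⟨cm σA, (hPcm σA).mpr h⟩ := rfl
  have hσSre : ∀ j, ((σS.1) (d j)).re = (σ₀ (d j)).re := by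
    intro j
    by_cases h : P σA
    · rw [hσSdef, dif_pos h]; rfl
    · rw [hσSdef, dif_neg h]
      show ((starRingEnd ℂ) (σA (d j))).re = (σ₀ (d j)).re
      simp only [Complex.conj_re]
      rfl
  have hsign : ∀ (σ : {σ : E →ₐ[ℚ] ℂ // P σ}) (j : Fin m),
      if σ = σS ∧ (j : ℕ) = 0 then 0 < ((σ.1) (d j)).re else ((σ.1) (d j)).re < 0 := by
    intro σ j
    by_cases hσ : σ = σS
    · by_cases hj : (j : ℕ) = 0
      · rw [if_pos ⟨hσ, hj⟩, hσ, hσSre]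
        exact hσ₀1 j hj
      · rw [if_neg (by tauto), hσ, hσSre]
        exact hσ₀neg j (by omega)
    · rw [if_neg (by tauto)]
      have hA : (σ.1 : E →+* ℂ) ≠ σ₀ := by
        intro h
        have hEq : σ.1 = σA := AlgHom.ext fun x => RingHom.congr_fun h x
        by_cases hp : P σA
        · exact hσ (Subtype.ext (by rw [hEq, hσSdef, dif_pos hp]))
        · exact hp (hEq ▸ σ.2)
      have hB2 : (σ.1 : E →+* ℂ) ≠ (starRingEnd ℂ).comp σ₀ := by
        intro h
        have hEq : σ.1 = cm σA := AlgHom.ext fun x => RingHom.congr_fun h x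
        by_cases hp : P σA
        · have hnp : ¬ P (cm σA) := fun hh => (hPcm σA).mp hh hp
          exact hnp (hEq ▸ σ.2)
        · exact hσ (Subtype.ext (by rw [hEq, hσSdef, dif_neg hp]))
      exact hother _ hA hB2 j
  -- the weighted coordinate map G
  have hwpos : ∀ (σ : {σ : E →ₐ[ℚ] ℂ // P σ}) (j : Fin m),
      0 < Real.sqrt (2 * |((σ.1) (d j)).re|) := by
    intro σ j
    apply Real.sqrt_pos.mpr
    have h := hsign σ j
    by_cases hc : σ = σS ∧ (j : ℕ) = 0
    · rw [if_pos hc] at h; rw [abs_of_pos h]; linarith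
    · rw [if_neg hc] at h; rw [abs_of_neg h]; linarith
  set w : {σ : E →ₐ[ℚ] ℂ // P σ} → Fin m → ℝ :=
    fun σ j => Real.sqrt (2 * |((σ.1) (d j)).re|) with hwdef
  set G : (ℝ ⊗[ℚ] V) →ₗ[ℝ] (({σ : E →ₐ[ℚ] ℂ // P σ} × Fin m × Fin 2) → ℝ) :=
    LinearMap.pi (fun p => w p.1 p.2.1 •
      ((if p.2.2 = 0 then Complex.reLm else Complex.imLm) ∘ₗ (zmap u p.1.1 p.2.1))) with hGdef
  have hGapp : ∀ ξ p, G ξ p = w p.1 p.2.1 *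
      (if p.2.2 = 0 then (zmap u p.1.1 p.2.1 ξ).re else (zmap u p.1.1 p.2.1 ξ).im) := by
    intro ξ p
    by_cases h : p.2.2 = 0 <;>
      simp [hGdef, LinearMap.pi_apply, h, Complex.reLm, Complex.imLm]
  -- the quadratic form as a signed sum of squares
  have hsum : ∀ ξ : ℝ ⊗[ℚ] V, B ξ ξ =
      ∑ p : {σ : E →ₐ[ℚ] ℂ // P σ} × Fin m × Fin 2,
        (if p.1 = σS ∧ ((p.2.1 : ℕ) = 0) then (1:ℝ) else -1) * (G ξ p) ^ 2 := by
    intro ξ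
    rw [hQ2 ξ, Fintype.sum_prod_type]
    refine Finset.sum_congr rfl fun σ _ => ?_
    rw [Fintype.sum_prod_type]
    refine Finset.sum_congr rfl fun j _ => ?_
    rw [Fin.sum_univ_two]
    set z := zmap u σ.1 j ξ with hzdef
    have hW : w σ j ^ 2 = 2 * |(σ.1 (d j)).re| := Real.sq_sqrt (by positivity)
    have hN : Complex.normSq z = z.re ^ 2 + z.im ^ 2 := by
      rw [Complex.normSq_apply]; ring
    have hG0 : G ξ (σ, j, 0) = w σ j * z.re := by rw [hGapp]; simp [hzdef]
    have hG1 : G ξ (σ, j, 1) = w σ j * z.im := by rw [hGapp]; simp [hzdef]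
    rw [hG0, hG1]
    by_cases h : σ = σS ∧ (j : ℕ) = 0
    · simp only [if_pos h]
      have hpos := hsign σ j; rw [if_pos h] at hpos
      rw [abs_of_pos hpos] at hW
      rw [hN]
      linear_combination (-(z.re ^ 2 + z.im ^ 2)) * hW
    · simp only [if_neg h]
      have hneg := hsign σ j; rw [if_neg h] at hneg
      rw [abs_of_neg hneg] at hW
      rw [hN]
      linear_combination (z.re ^ 2 + z.im ^ 2) * hW
  -- injectivity of G
  have hz0all : ∀ ξ : ℝ ⊗[ℚ] V, G ξ = 0 → ∀ (τ : E →ₐ[ℚ] ℂ) (j : Fin m),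
      zmap u τ j ξ = 0 := by
    intro ξ hξ
    have hzS : ∀ (σ : {σ : E →ₐ[ℚ] ℂ // P σ}) (j : Fin m), zmap u σ.1 j ξ = 0 := by
      intro σ j
      have h0 := congrFun hξ (σ, j, 0)
      have h1 := congrFun hξ (σ, j, 1)
      have hw := (hwpos σ j).ne'
      rw [hGapp] at h0 h1
      simp only [Pi.zero_apply] at h0 h1
      norm_num [hw] at h0 h1
      exact Complex.ext (by simpa using h0.resolve_left hw) (by simpa using h1.resolve_left hw)
    intro τ j
    by_cases hp : P τ
    · exact hzS ⟨τ, hp⟩ j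
    · have hcmτ : P (cm τ) := (hPcm τ).mpr hp
      rw [← hcm_inv τ, hzcm, hzS ⟨cm τ, hcmτ⟩ j, map_zero]
  have hGinj : Function.Injective G := by
    rw [← LinearMap.ker_eq_bot, LinearMap.ker_eq_bot']
    intro ξ hξ
    have hz0 := hz0all ξ hξ
    set bE := Module.finBasis ℚ E with hbE
    set bV := bE.smulTower u with hbV
    set bR := bV.baseChange ℝ with hbR
    have hz : ∀ (τ : E →ₐ[ℚ] ℂ) (j : Fin m) (i' : Fin (Module.finrank ℚ E)) (j' : Fin m),
        zmap u τ j (bR (i', j')) = if j' = j then τ (bE i') else 0 := by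
      intro τ j i' j'
      rw [hbR, Module.Basis.baseChange_apply, zmap_tmul, one_smul, hbV, Module.Basis.smulTower_apply,
        map_smul, Module.Basis.repr_self, Finsupp.smul_apply, Finsupp.single_apply]
      by_cases h : j' = j
      · simp [h]
      · simp [h]
    have hexp : ∀ (τ : E →ₐ[ℚ] ℂ) (j : Fin m),
        zmap u τ j ξ = ∑ i', ((bR.repr ξ (i', j) : ℝ) : ℂ) * τ (bE i') := by
      intro τ j
      conv_lhs => rw [← bR.sum_repr ξ]
      rw [map_sum]
      simp only [map_smul]
      rw [Fintype.sum_prod_type]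
      refine Finset.sum_congr rfl fun i' _ => ?_
      rw [Finset.sum_eq_single j]
      · rw [hz τ j i' j, if_pos rfl, Complex.real_smul]
      · intro j' _ hj'
        rw [hz τ j i' j', if_neg hj', smul_zero]
      · intro h; exact absurd (Finset.mem_univ j) h
    have hrep : ∀ p, bR.repr ξ p = 0 := by
      rintro ⟨i, j⟩
      have h := aux_emb_inj bE (fun i' => ((bR.repr ξ (i', j) : ℝ) : ℂ))
        (fun τ => by rw [← hexp τ j]; exact hz0 τ j)
      have h2 := congrFun h i
      simpa using h2
    have hrep0 : bR.repr ξ = 0 := by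
      ext p; exact hrep p
    calc ξ = bR.repr.symm (bR.repr ξ) := (bR.repr.symm_apply_apply ξ).symm
      _ = 0 := by rw [hrep0, map_zero]
  -- dimensions
  haveI : Module.Finite E V := Module.Finite.of_basis u
  haveI : Module.Finite ℚ V := Module.Finite.trans E V
  have hfrT : Module.finrank ℝ (ℝ ⊗[ℚ] V) = 2 * m * s := by
    rw [Module.finrank_baseChange, ← Module.finrank_mul_finrank ℚ E V, hfrE,
      Module.finrank_eq_card_basis u, Fintype.card_fin]
    ring
  have hcardT : Fintype.card ({σ : E →ₐ[ℚ] ℂ // P σ} × Fin m × Fin 2) = 2 * m * s := by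
    simp only [Fintype.card_prod, hcardS, Fintype.card_fin]
    ring
  have hfrFun : Module.finrank ℝ (({σ : E →ₐ[ℚ] ℂ // P σ} × Fin m × Fin 2) → ℝ) = 2 * m * s := by
    rw [Module.finrank_fintype_fun_eq_card, hcardT]
  let Geq : (ℝ ⊗[ℚ] V) ≃ₗ[ℝ] (({σ : E →ₐ[ℚ] ℂ // P σ} × Fin m × Fin 2) → ℝ) :=
    LinearMap.linearEquivOfInjective G hGinj (by rw [hfrT, hfrFun])
  have hGeq : ∀ ξ, Geq ξ = G ξ := fun ξ => rfl
  -- the index equivalence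
  set Pos : ({σ : E →ₐ[ℚ] ℂ // P σ} × Fin m × Fin 2) → Prop :=
    fun p => p.1 = σS ∧ ((p.2.1 : ℕ) = 0) with hPosdef
  let j0 : Fin m := ⟨0, hm0⟩
  let ePos : {p : {σ : E →ₐ[ℚ] ℂ // P σ} × Fin m × Fin 2 // Pos p} ≃ Fin 2 :=
    { toFun := fun q => q.1.2.2
      invFun := fun k => ⟨(σS, j0, k), ⟨rfl, rfl⟩⟩
      left_inv := by
        rintro ⟨⟨σ, j, k⟩, h1, h2⟩
        apply Subtype.ext
        simp only at h1 h2 ⊢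
        refine Prod.ext h1.symm (Prod.ext ?_ rfl)
        exact (Fin.ext h2).symm
      right_inv := fun k => rfl }
  have hcard2 : Fintype.card {p : {σ : E →ₐ[ℚ] ℂ // P σ} × Fin m × Fin 2 // Pos p} = 2 := by
    rw [Fintype.card_congr ePos, Fintype.card_fin]
  have hs1 : 1 ≤ s := by
    rw [← hs]
    exact Module.finrank_pos
  have h2le : 2 ≤ 2 * m * s := by nlinarith
  have hcardNeg : Fintype.card {p : {σ : E →ₐ[ℚ] ℂ // P σ} × Fin m × Fin 2 // ¬ Pos p}
      = 2 * m * s - 2 := by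
    rw [Fintype.card_subtype_compl, hcardT, hcard2]
  let eNeg : {p : {σ : E →ₐ[ℚ] ℂ // P σ} × Fin m × Fin 2 // ¬ Pos p} ≃ Fin (2 * m * s - 2) :=
    Fintype.equivFinOfCardEq hcardNeg
  let efin : (Fin 2 ⊕ Fin (2 * m * s - 2)) ≃ Fin (2 * m * s) :=
    finSumFinEquiv.trans (finCongr (by omega))
  let e : ({σ : E →ₐ[ℚ] ℂ // P σ} × Fin m × Fin 2) ≃ Fin (2 * m * s) :=
    (Equiv.sumCompl Pos).symm.trans ((ePos.sumCongr eNeg).trans efin)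
  have he : ∀ p, (((e p) : ℕ) < 2 ↔ Pos p) := by
    intro p
    by_cases hp : Pos p
    · have h1 : e p = efin (Sum.inl (ePos ⟨p, hp⟩)) := by
        simp only [e, Equiv.trans_apply]
        rw [Equiv.sumCompl_symm_apply_of_pos hp]
        rfl
      rw [h1]
      simp only [efin, Equiv.trans_apply, finSumFinEquiv_apply_left, finCongr_apply,
        Fin.coe_cast, Fin.coe_castAdd]
      exact iff_of_true (ePos ⟨p, hp⟩).isLt hp
    · have h1 : e p = efin (Sum.inr (eNeg ⟨p, hp⟩)) := by
        simp only [e, Equiv.trans_apply]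
        rw [Equiv.sumCompl_symm_apply_of_neg hp]
        rfl
      rw [h1]
      simp only [efin, Equiv.trans_apply, finSumFinEquiv_apply_right, finCongr_apply,
        Fin.coe_cast, Fin.coe_natAdd]
      exact iff_of_false (by omega) hp
  -- conclusion
  refine ⟨Geq.trans (LinearEquiv.funCongrLeft ℝ ℝ e.symm), fun ξ => ?_⟩
  rw [hsum ξ]
  refine Fintype.sum_equiv e _ _ fun p => ?_
  have hval : (Geq.trans (LinearEquiv.funCongrLeft ℝ ℝ e.symm)) ξ (e p) = G ξ p := by
    simp only [LinearEquiv.trans_apply, LinearEquiv.funCongrLeft_apply,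
      LinearMap.funLeft_apply, hGeq]
    rw [Equiv.symm_apply_apply]
  rw [hval]
  by_cases hp : p.1 = σS ∧ ((p.2.1 : ℕ) = 0)
  · rw [if_pos hp, if_pos ((he p).mpr hp)]
  · rw [if_neg hp, if_neg (fun hh => hp ((he p).mp hh))]
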